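/- Let ℓ > 0, α > 0, and N ≥ 1. Let x_1^GH, …, x_N^GH and w_1^GH, …, w_N^GH be the nodes and weights of the N-point Gauss–Hermite rule. Define the scaled nodes x̃_n = x_n^GH/(√2·α·β) and the weights w̃_n = (1+2δ²)^{−1/2} · w_n^GH · e^{δ²·x̃_n²} · ∑_{m=0}^{⌊(N−1)/2⌋} (1/(2^m·m!)) · (2α²β²/(1+2δ²) − 1)^m · H_{2m}(x_n^GH). Then for every j = 0, 1, …, N−1: ∑_{n=1}^N w̃_n · φ_j(x̃_n) = ∫_ℝ φ_j dμ. -/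

import Mathlib

open MeasureTheory ProbabilityTheory

namespace GH

open Polynomial Filter
open scoped NNReal ENNReal

noncomputable def gw (x : ℝ) : ℝ := Real.exp (-x^2/2)

noncomputable def Gi (p : ℝ[X]) : ℝ := ∫ x : ℝ, p.eval x * gw x

noncomputable def Hr (n : ℕ) : ℝ[X] := (Polynomial.hermite n).map (Int.castRingHom ℝ)

noncomputable def Hs (τ : ℝ) (n : ℕ) : ℝ[X] := (Hr n).comp (Polynomial.C τ * Polynomial.X)

lemma abs_pow_le (i : ℕ) (x : ℝ) : |x| ^ i ≤ (Nat.factorial i : ℝ) * Real.exp |x| := by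
  have h0 : |x| ^ i / (Nat.factorial i : ℝ) ≤ Real.exp |x| := by
    refine le_trans ?_ (Real.sum_le_exp_of_nonneg (abs_nonneg x) (i+1))
    exact Finset.single_le_sum (f := fun k => |x|^k / (Nat.factorial k : ℝ))
      (fun k _ => by positivity) (Finset.self_mem_range_succ i)
  have hi : (0:ℝ) < (Nat.factorial i : ℝ) := by positivity
  calc |x| ^ i = |x| ^ i / (Nat.factorial i : ℝ) * (Nat.factorial i : ℝ) := by field_simp
    _ ≤ Real.exp |x| * (Nat.factorial i : ℝ) := by nlinarith
    _ = (Nat.factorial i : ℝ) * Real.exp |x| := mul_comm _ _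

lemma poly_bound (p : ℝ[X]) : ∃ C : ℝ, 0 ≤ C ∧ ∀ x, |p.eval x| ≤ C * Real.exp |x| := by
  refine ⟨∑ i ∈ Finset.range (p.natDegree + 1), |p.coeff i| * (Nat.factorial i : ℝ),
    by positivity, fun x => ?_⟩
  rw [Polynomial.eval_eq_sum_range, Finset.sum_mul]
  refine (Finset.abs_sum_le_sum_abs _ _).trans (Finset.sum_le_sum fun i _ => ?_)
  rw [abs_mul, abs_pow, mul_assoc]
  exact mul_le_mul_of_nonneg_left (abs_pow_le i x) (abs_nonneg _)

lemma int_exp_shift (a : ℝ) : Integrable (fun x : ℝ => Real.exp (a*x - x^2/2)) := by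
  have h : Integrable (fun x : ℝ => Real.exp (-(1/2) * x^2)) :=
    integrable_exp_neg_mul_sq (by norm_num)
  have h2 := (h.comp_sub_right a).const_mul (Real.exp (a^2/2))
  refine h2.congr (Filter.Eventually.of_forall fun x => ?_)
  dsimp only
  rw [← Real.exp_add]
  congr 1
  ring

noncomputable def bnd (C : ℝ) (x : ℝ) : ℝ :=
  C * (Real.exp (x - x^2/2) + Real.exp (-x - x^2/2))

lemma bnd_integrable (C : ℝ) : Integrable (bnd C) := by
  have h1 := int_exp_shift 1
  have h2 := int_exp_shift (-1)
  simp only [one_mul, neg_one_mul] at h1 h2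
  exact (h1.add h2).const_mul C

lemma gw_cont : Continuous gw := by
  unfold gw; fun_prop

lemma le_bnd {p : ℝ[X]} {C : ℝ} (hCpos : 0 ≤ C)
    (hC : ∀ x, |p.eval x| ≤ C * Real.exp |x|) (x : ℝ) :
    ‖p.eval x * gw x‖ ≤ bnd C x := by
  rw [Real.norm_eq_abs, abs_mul, gw, abs_of_pos (Real.exp_pos _)]
  have h1 : |p.eval x| * Real.exp (-x^2/2) ≤ C * Real.exp |x| * Real.exp (-x^2/2) :=
    mul_le_mul_of_nonneg_right (hC x) (Real.exp_pos _).le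
  refine h1.trans ?_
  rw [bnd, mul_assoc, ← Real.exp_add]
  have hle : Real.exp (|x| + -x^2/2) ≤ Real.exp (x - x^2/2) + Real.exp (-x - x^2/2) := by
    rcases abs_cases x with ⟨h, _⟩ | ⟨h, _⟩
    · rw [h]
      have := (Real.exp_pos (-x - x^2/2)).le
      have : Real.exp (x + -x^2/2) = Real.exp (x - x^2/2) := by ring_nf
      nlinarith [Real.exp_pos (-x - x^2/2)]
    · rw [h]
      have : Real.exp (-x + -x^2/2) = Real.exp (-x - x^2/2) := by ring_nf
      nlinarith [Real.exp_pos (x - x^2/2)]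
  calc C * Real.exp (|x| + -x^2/2) ≤ C * (Real.exp (x - x^2/2) + Real.exp (-x - x^2/2)) :=
        mul_le_mul_of_nonneg_left hle hCpos
    _ = _ := by ring

lemma poly_gw_integrable (p : ℝ[X]) : Integrable (fun x : ℝ => p.eval x * gw x) := by
  obtain ⟨C, hC0, hC⟩ := poly_bound p
  refine Integrable.mono' (bnd_integrable C) ?_ (Filter.Eventually.of_forall (le_bnd hC0 hC))
  exact ((p.continuous_aeval).mul gw_cont).aestronglyMeasurable

lemma tendsto_shift_top (a : ℝ) :
    Tendsto (fun x : ℝ => Real.exp (a*x - x^2/2)) atTop (nhds 0) := by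
  refine Real.tendsto_exp_atBot.comp ?_
  refine tendsto_atBot_mono' atTop ?_ tendsto_neg_atTop_atBot
  filter_upwards [eventually_ge_atTop (2*(|a|+1))] with x hx
  have h1 : a ≤ |a| := le_abs_self a
  have h0 : (0:ℝ) ≤ |a| := abs_nonneg a
  show a*x - x^2/2 ≤ -x
  nlinarith

lemma tendsto_shift_bot (a : ℝ) :
    Tendsto (fun x : ℝ => Real.exp (a*x - x^2/2)) atBot (nhds 0) := by
  refine Real.tendsto_exp_atBot.comp ?_
  refine tendsto_atBot_mono' atBot ?_ tendsto_id
  filter_upwards [eventually_le_atBot (-(2*(|a|+1)))] with x hx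
  have h1 : -a ≤ |a| := neg_le_abs a
  have h0 : (0:ℝ) ≤ |a| := abs_nonneg a
  show a*x - x^2/2 ≤ id x
  simp only [id]
  nlinarith

lemma tendsto_bnd_top (C : ℝ) : Tendsto (bnd C) atTop (nhds 0) := by
  have h1 := tendsto_shift_top 1
  have h2 := tendsto_shift_top (-1)
  simp only [one_mul, neg_one_mul] at h1 h2
  have := ((h1.add h2).const_mul C)
  simp at this
  exact this

lemma tendsto_bnd_bot (C : ℝ) : Tendsto (bnd C) atBot (nhds 0) := by
  have h1 := tendsto_shift_bot 1
  have h2 := tendsto_shift_bot (-1)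
  simp only [one_mul, neg_one_mul] at h1 h2
  have := ((h1.add h2).const_mul C)
  simp at this
  exact this

lemma poly_gw_tendsto_top (p : ℝ[X]) :
    Tendsto (fun x : ℝ => p.eval x * gw x) atTop (nhds 0) := by
  obtain ⟨C, hC0, hC⟩ := poly_bound p
  exact squeeze_zero_norm (le_bnd hC0 hC) (tendsto_bnd_top C)

lemma poly_gw_tendsto_bot (p : ℝ[X]) :
    Tendsto (fun x : ℝ => p.eval x * gw x) atBot (nhds 0) := by
  obtain ⟨C, hC0, hC⟩ := poly_bound p
  exact squeeze_zero_norm (le_bnd hC0 hC) (tendsto_bnd_bot C)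

lemma gw_hasDeriv (x : ℝ) : HasDerivAt gw (-x * gw x) x := by
  have h1 : HasDerivAt (fun x : ℝ => -x^2/2) (-x) x := by
    have := ((hasDerivAt_pow 2 x).neg).div_const 2
    convert this using 1
    · rfl
    · rfl
    · rfl
    simp
    ring
  have := h1.exp
  convert this using 1
  · rfl
  unfold gw
  ring

lemma Gi_X_mul (p : ℝ[X]) : Gi (X * p) = Gi (derivative p) := by
  set f : ℝ → ℝ := fun x => p.eval x * gw x with hf
  set F : ℝ → ℝ := fun x => ((derivative p - X * p).eval x) * gw x with hF
  have hderiv : ∀ x : ℝ, HasDerivAt f (F x) x := by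
    intro x
    have := (p.hasDerivAt x).mul (gw_hasDeriv x)
    convert this using 1
    · rfl
    · rfl
    · rfl
    simp [hF]
    ring
  have hFint : Integrable F := poly_gw_integrable _
  have htop : Tendsto f atTop (nhds 0) := poly_gw_tendsto_top p
  have hbot : Tendsto f atBot (nhds 0) := poly_gw_tendsto_bot p
  have hIoi : ∫ x in Set.Ioi (0:ℝ), F x = 0 - f 0 :=
    integral_Ioi_of_hasDerivAt_of_tendsto' (fun x _ => hderiv x) hFint.integrableOn htop
  have hIic : ∫ x in Set.Iic (0:ℝ), F x = f 0 - 0 :=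
    integral_Iic_of_hasDerivAt_of_tendsto' (fun x _ => hderiv x) hFint.integrableOn hbot
  have htot : ∫ x : ℝ, F x = 0 := by
    rw [← integral_add_compl (measurableSet_Iic (a := (0:ℝ))) hFint]
    rw [Set.compl_Iic, hIic, hIoi]
    ring
  have hsplit : ∫ x : ℝ, F x = Gi (derivative p) - Gi (X * p) := by
    unfold Gi
    rw [← integral_sub (poly_gw_integrable _) (poly_gw_integrable _)]
    congr 1
    funext x
    simp [hF]
    ring
  linarith [htot, hsplit]

lemma Gi_add (p q : ℝ[X]) : Gi (p + q) = Gi p + Gi q := by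
  unfold Gi
  rw [← integral_add (poly_gw_integrable p) (poly_gw_integrable q)]
  congr 1; funext x; simp; ring

lemma Gi_sub (p q : ℝ[X]) : Gi (p - q) = Gi p - Gi q := by
  unfold Gi
  rw [← integral_sub (poly_gw_integrable p) (poly_gw_integrable q)]
  congr 1; funext x; simp; ring

lemma Gi_C_mul (a : ℝ) (p : ℝ[X]) : Gi (C a * p) = a * Gi p := by
  unfold Gi
  rw [← integral_const_mul]
  congr 1; funext x; simp; ring

lemma Gi_nsmul (n : ℕ) (p : ℝ[X]) : Gi (n • p) = n * Gi p := by
  have : (n : ℕ) • p = C (n : ℝ) * p := by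
    simp [Polynomial.smul_eq_C_mul]
  rw [this, Gi_C_mul]

lemma Gi_zero : Gi 0 = 0 := by simp [Gi]

lemma Gi_one : Gi 1 = Real.sqrt (2 * Real.pi) := by
  unfold Gi gw
  simp only [Polynomial.eval_one, one_mul]
  have h : ∀ x : ℝ, Real.exp (-x^2/2) = Real.exp (-(1/2) * x^2) := fun x => by ring_nf
  simp_rw [h]
  rw [integral_gaussian]
  congr 1
  ring

lemma Gi_finset_sum {ι : Type*} (s : Finset ι) (f : ι → ℝ[X]) :
    Gi (∑ i ∈ s, f i) = ∑ i ∈ s, Gi (f i) := by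
  induction s using Finset.cons_induction with
  | empty => simp [Gi_zero]
  | cons a s ha ih => rw [Finset.sum_cons, Gi_add, ih, Finset.sum_cons]

lemma derivative_hermite (n : ℕ) :
    derivative (Polynomial.hermite (n+1)) = (n+1 : ℕ) • Polynomial.hermite n := by
  induction n with
  | zero => simp [Polynomial.hermite_one]
  | succ n ih =>
      rw [Polynomial.hermite_succ (n+1)]
      rw [Polynomial.derivative_sub, Polynomial.derivative_mul, Polynomial.derivative_X, ih,
        Polynomial.derivative_smul]
      have h : X * ((n + 1) • Polynomial.hermite n)
          - (n + 1) • derivative (Polynomial.hermite n)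
          = (n+1) • Polynomial.hermite (n+1) := by
        rw [Polynomial.hermite_succ n, smul_sub]
        ring
      rw [one_mul, add_sub_assoc, h]
      ring

lemma Hr_succ (n : ℕ) : Hr (n + 1) = X * Hr n - derivative (Hr n) := by
  unfold Hr
  rw [Polynomial.hermite_succ, Polynomial.map_sub, Polynomial.map_mul, Polynomial.map_X,
    Polynomial.derivative_map]

lemma derivative_Hr (n : ℕ) : derivative (Hr (n+1)) = (n+1 : ℕ) • Hr n := by
  unfold Hr
  rw [Polynomial.derivative_map, derivative_hermite]
  simp [nsmul_eq_mul]

lemma Hr_rec (n : ℕ) : Hr (n + 2) = X * Hr (n+1) - (n+1 : ℕ) • Hr n := by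
  rw [Hr_succ (n+1), derivative_Hr]

lemma Hr_zero : Hr 0 = 1 := by
  unfold Hr; simp [Polynomial.hermite_zero]

lemma Hr_one : Hr 1 = X := by
  unfold Hr; simp [Polynomial.hermite_one]

lemma Hs_zero (τ : ℝ) : Hs τ 0 = 1 := by unfold Hs; rw [Hr_zero]; simp

lemma Hs_one (τ : ℝ) : Hs τ 1 = C τ * X := by unfold Hs; rw [Hr_one]; simp

lemma Hs_rec (τ : ℝ) (n : ℕ) :
    Hs τ (n + 2) = (C τ * X) * Hs τ (n+1) - (n+1 : ℕ) • Hs τ n := by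
  unfold Hs
  rw [Hr_rec, Polynomial.sub_comp, Polynomial.mul_comp, Polynomial.X_comp, Polynomial.smul_comp]

lemma derivative_Hs (τ : ℝ) (n : ℕ) :
    derivative (Hs τ (n+1)) = C τ * ((n+1 : ℕ) • Hs τ n) := by
  unfold Hs
  rw [Polynomial.derivative_comp, derivative_Hr]
  simp [Polynomial.smul_comp]

lemma Gi_Hs_step (τ : ℝ) (n : ℕ) :
    Gi (Hs τ (n+2)) = (n+1 : ℕ) * (τ^2 - 1) * Gi (Hs τ n) := by
  rw [Hs_rec, Gi_sub, Gi_nsmul]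
  have h1 : (C τ * X) * Hs τ (n+1) = C τ * (X * Hs τ (n+1)) := by ring
  rw [h1, Gi_C_mul, Gi_X_mul, derivative_Hs, Gi_C_mul, Gi_nsmul]
  ring

lemma Gi_Hs_zero (τ : ℝ) : Gi (Hs τ 0) = Real.sqrt (2 * Real.pi) := by
  rw [Hs_zero, Gi_one]

lemma Gi_Hs_one (τ : ℝ) : Gi (Hs τ 1) = 0 := by
  rw [Hs_one]
  have h : (X : ℝ[X]) = X * 1 := by ring
  rw [Gi_C_mul, h, Gi_X_mul]
  simp [Gi_zero]

lemma Gi_Hs_odd (τ : ℝ) (r : ℕ) : Gi (Hs τ (2*r+1)) = 0 := by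
  induction r with
  | zero => simpa using Gi_Hs_one τ
  | succ r ih =>
      have h : 2*(r+1)+1 = (2*r+1) + 2 := by ring
      rw [h, Gi_Hs_step, ih]
      ring

lemma Gi_Hs_even (τ : ℝ) (r : ℕ) :
    (2^r * (Nat.factorial r) : ℝ) * Gi (Hs τ (2*r)) =
      (Nat.factorial (2*r) : ℝ) * (τ^2-1)^r * Real.sqrt (2 * Real.pi) := by
  induction r with
  | zero => simpa using Gi_Hs_zero τ
  | succ r ih =>
      have h2 : 2*(r+1) = (2*r) + 2 := by ring
      rw [h2, Gi_Hs_step]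
      have hf1 : (Nat.factorial (2*r+2) : ℝ) =
          ((2*r:ℝ)+2) * ((2*r+1) * (Nat.factorial (2*r))) := by
        push_cast [Nat.factorial_succ]
        ring
      have hf2 : (Nat.factorial (r+1) : ℝ) = ((r:ℝ)+1) * (Nat.factorial r) := by
        push_cast [Nat.factorial_succ]
        ring
      rw [hf1, hf2]
      push_cast
      linear_combination (2*((r:ℝ)+1)*((2*(r:ℝ))+1)*(τ^2-1)) * ih

lemma Hs_one_eq (n : ℕ) : Hs 1 n = Hr n := by
  unfold Hs; simp

lemma Gi_Hr (m : ℕ) :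
    Gi (Hr m) = if m = 0 then Real.sqrt (2 * Real.pi) else 0 := by
  match m with
  | 0 => simpa [Hs_one_eq] using Gi_Hs_zero 1
  | 1 => simpa [Hs_one_eq] using Gi_Hs_one 1
  | (r+2) =>
    have := Gi_Hs_step 1 r
    simp only [Hs_one_eq, one_pow, sub_self, mul_zero, zero_mul] at this
    simpa using this

lemma Gi_step2 (p q : ℝ[X]) : Gi (p * (X * q - derivative q)) = Gi (derivative p * q) := by
  have h : p * (X * q - derivative q) = X * (p * q) - p * derivative q := by ring
  rw [h, Gi_sub, Gi_X_mul, derivative_mul, Gi_add]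
  ring

lemma Gi_orth : ∀ (k m : ℕ), Gi (Hr m * Hr k)
    = if m = k then (Nat.factorial k : ℝ) * Real.sqrt (2 * Real.pi) else 0 := by
  intro k
  induction k with
  | zero =>
      intro m
      rw [Hr_zero, mul_one, Gi_Hr]
      simp
  | succ k ih =>
      intro m
      rw [Hr_succ k, Gi_step2]
      match m with
      | 0 =>
        simp only [Hr_zero, Polynomial.derivative_one, zero_mul, Gi_zero]
        simp
      | (r+1) =>
        rw [derivative_Hr, smul_mul_assoc, Gi_nsmul, ih r]
        by_cases h : r = k
        · subst h
          simp [Nat.factorial_succ]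
          ring
        · have h2 : ¬ (r + 1 = k + 1) := by omega
          simp [h, h2]

lemma natDegree_Hr_le (n : ℕ) : (Hr n).natDegree ≤ n := by
  unfold Hr
  refine le_trans Polynomial.natDegree_map_le ?_
  simp [Polynomial.natDegree_hermite]

lemma Hr_eval (n : ℕ) (x : ℝ) :
    (Hr n).eval x = (Polynomial.aeval x (Polynomial.hermite n) : ℝ) := by
  rw [Polynomial.aeval_def, algebraMap_int_eq, Polynomial.eval₂_eq_eval_map]
  rfl

lemma Hs_eval (τ : ℝ) (n : ℕ) (x : ℝ) :
    (Hs τ n).eval x = (Hr n).eval (τ * x) := by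
  unfold Hs
  simp [Polynomial.eval_comp]

lemma integral_stdGauss (f : ℝ → ℝ) :
    ∫ x, f x ∂(gaussianReal 0 1) = (Real.sqrt (2*Real.pi))⁻¹ * ∫ x, f x * gw x := by
  rw [gaussianReal_of_var_ne_zero 0 one_ne_zero]
  have hpdf : gaussianPDF 0 1 =
      fun x => ((Real.toNNReal (gaussianPDFReal 0 1 x) : ℝ≥0) : ℝ≥0∞) := rfl
  rw [hpdf, integral_withDensity_eq_integral_smul
    (measurable_gaussianPDFReal 0 1).real_toNNReal f]
  rw [← integral_const_mul]
  congr 1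
  funext x
  have h0 : 0 ≤ gaussianPDFReal 0 1 x := gaussianPDFReal_nonneg 0 1 x
  rw [NNReal.smul_def, Real.coe_toNNReal _ h0]
  rw [gaussianPDFReal]
  push_cast
  unfold gw
  rw [smul_eq_mul]
  ring_nf

lemma cov (s : ℝ) (hs : 0 < s) (p : ℝ[X]) :
    ∫ x : ℝ, p.eval x * Real.exp (-(s * x^2)/2)
      = Real.sqrt (1/s) * Gi (p.comp (C (Real.sqrt (1/s)) * X)) := by
  set σ := Real.sqrt (1/s) with hσdef
  have hσ : 0 < σ := Real.sqrt_pos.mpr (by positivity)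
  have hσ2 : σ^2 = 1/s := Real.sq_sqrt (by positivity)
  have h := MeasureTheory.Measure.integral_comp_mul_left
    (fun x => p.eval x * Real.exp (-(s * x^2)/2)) σ
  have hL : (∫ x : ℝ, p.eval (σ * x) * Real.exp (-(s * (σ*x)^2)/2))
      = Gi (p.comp (C σ * X)) := by
    unfold Gi
    congr 1
    funext x
    rw [Polynomial.eval_comp]
    simp only [Polynomial.eval_mul, Polynomial.eval_C, Polynomial.eval_X]
    congr 2
    have h2 : s * (σ*x)^2 = x^2 := by
      have h3 : s * σ^2 = 1 := by rw [hσ2]; field_simp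
      nlinarith [h3]
    rw [h2]
  rw [hL] at h
  rw [h]
  rw [abs_of_pos (by positivity : (0:ℝ) < σ⁻¹), smul_eq_mul]
  field_simp

end GH

/-- Probabilists' Hermite polynomial evaluated at a real number. -/
noncomputable def H (n : ℕ) (x : ℝ) : ℝ := Polynomial.aeval x (Polynomial.hermite n)

/-- The standard Gaussian measure on ℝ. -/
noncomputable def stdGauss : Measure ℝ := gaussianReal 0 1

lemma H_eq (n : ℕ) (x : ℝ) : H n x = (GH.Hr n).eval x := (GH.Hr_eval n x).symm

lemma integral_stdGauss' (f : ℝ → ℝ) :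
    ∫ x, f x ∂stdGauss = (Real.sqrt (2*Real.pi))⁻¹ * ∫ x, f x * GH.gw x := by
  unfold stdGauss
  exact GH.integral_stdGauss f

lemma integral_stdGauss_poly (p : Polynomial ℝ) :
    ∫ x, p.eval x ∂stdGauss = (Real.sqrt (2*Real.pi))⁻¹ * GH.Gi p := by
  unfold stdGauss GH.Gi
  exact GH.integral_stdGauss _

theorem stmt_12 (ℓ α : ℝ) (hℓ : 0 < ℓ) (hα : 0 < α)
    (ε β δ2 : ℝ)
    (hε : ε = 1 / (Real.sqrt 2 * ℓ))
    (hβ : β = (1 + (2 * ε / α) ^ 2) ^ ((1 : ℝ) / 4))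
    (hδ2 : δ2 = α ^ 2 * (β ^ 2 - 1) / 2)
    (φ : ℕ → ℝ → ℝ)
    (hφ : ∀ n x, φ n x = Real.sqrt (β / (n.factorial : ℝ)) * Real.exp (-δ2 * x ^ 2) *
      H n (Real.sqrt 2 * α * β * x))
    (N : ℕ) (hN : 1 ≤ N)
    (xGH wGH : Fin N → ℝ)
    (hinj : Function.Injective xGH)
    (hroot : ∀ n, H N (xGH n) = 0)
    (hexact : ∀ p : Polynomial ℝ, p.natDegree ≤ 2 * N - 1 →
      ∑ n, wGH n * p.eval (xGH n) = ∫ t, p.eval t ∂stdGauss)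
    (xt wt : Fin N → ℝ)
    (hxt : ∀ n, xt n = xGH n / (Real.sqrt 2 * α * β))
    (hwt : ∀ n, wt n = Real.sqrt (1 / (1 + 2 * δ2)) * wGH n * Real.exp (δ2 * xt n ^ 2) *
      ∑ m ∈ Finset.range ((N - 1) / 2 + 1),
        (1 / (2 ^ m * (m.factorial : ℝ))) * (2 * α ^ 2 * β ^ 2 / (1 + 2 * δ2) - 1) ^ m *
          H (2 * m) (xGH n))
    (j : ℕ) (hj : j < N) :
    ∑ n, wt n * φ j (xt n) = ∫ t, φ j t ∂stdGauss := by
  classical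
  have hβpos : 0 < β := by
    rw [hβ]; positivity
  have hβ1 : 1 ≤ β := by
    rw [hβ]
    apply Real.one_le_rpow ?_ (by norm_num)
    nlinarith [sq_nonneg (2*ε/α)]
  have hδnn : 0 ≤ δ2 := by
    have hb2 : 1 ≤ β^2 := by nlinarith
    rw [hδ2]
    nlinarith [sq_nonneg α]
  have hs : (0:ℝ) < 1 + 2*δ2 := by linarith
  set t : ℝ := Real.sqrt 2 * α * β with ht
  have htpos : 0 < t := by
    rw [ht]; positivity
  set σ : ℝ := Real.sqrt (1/(1+2*δ2)) with hσ
  have hσpos : 0 < σ := Real.sqrt_pos.mpr (by positivity)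
  set K : ℝ := Real.sqrt (β / (j.factorial : ℝ)) with hK
  set c : ℝ := 2*α^2*β^2/(1+2*δ2) - 1 with hc
  set M : ℕ := (N-1)/2 + 1 with hM
  set S : Polynomial ℝ := ∑ m ∈ Finset.range M,
      Polynomial.C (1/(2^m * (m.factorial : ℝ)) * c^m) * GH.Hr (2*m) with hS
  set P : Polynomial ℝ := S * GH.Hr j with hP
  -- pointwise rewriting of the quadrature sum
  have hpoint : ∀ n, wt n * φ j (xt n) = K * σ * (wGH n * P.eval (xGH n)) := by
    intro n
    have hx : t * xt n = xGH n := by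
      rw [hxt n]
      field_simp
    have hPe : P.eval (xGH n) =
        (∑ m ∈ Finset.range M, 1/(2^m * (m.factorial : ℝ)) * c^m * H (2*m) (xGH n))
          * H j (xGH n) := by
      rw [hP, Polynomial.eval_mul, hS, Polynomial.eval_finset_sum]
      congr 1
      · exact Finset.sum_congr rfl fun m _ => by
          rw [Polynomial.eval_mul, Polynomial.eval_C, H_eq]
      · rw [H_eq]
    rw [hwt n, hφ j (xt n), hx, hPe]
    have hexp2 : Real.exp (-δ2 * xt n ^ 2) = (Real.exp (δ2 * xt n ^ 2))⁻¹ := by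
      rw [← Real.exp_neg]
      congr 1
      ring
    rw [hexp2, ← hK]
    field_simp
  have hsum1 : ∑ n, wt n * φ j (xt n) = K * σ * ∑ n, wGH n * P.eval (xGH n) := by
    rw [Finset.sum_congr rfl (fun n _ => hpoint n), ← Finset.mul_sum]
  -- degree bound and exactness
  have hSdeg : S.natDegree ≤ N - 1 := by
    rw [hS]
    refine Polynomial.natDegree_sum_le_of_forall_le _ _ fun m hm => ?_
    refine le_trans (Polynomial.natDegree_C_mul_le _ _) ?_
    refine le_trans (GH.natDegree_Hr_le (2*m)) ?_
    have : m < M := Finset.mem_range.mp hm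
    rw [hM] at this
    omega
  have hPdeg : P.natDegree ≤ 2*N - 1 := by
    rw [hP]
    refine le_trans Polynomial.natDegree_mul_le ?_
    have h2 : (GH.Hr j).natDegree ≤ N - 1 := le_trans (GH.natDegree_Hr_le j) (by omega)
    omega
  have hex := hexact P hPdeg
  -- value of Gi P by orthogonality
  have hGiP : GH.Gi P = ∑ m ∈ Finset.range M,
      1/(2^m * (m.factorial : ℝ)) * c^m *
        (if 2*m = j then (j.factorial : ℝ) * Real.sqrt (2*Real.pi) else 0) := by
    rw [hP, hS, Finset.sum_mul, GH.Gi_finset_sum]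
    refine Finset.sum_congr rfl fun m _ => ?_
    rw [mul_assoc, GH.Gi_C_mul, GH.Gi_orth j (2*m)]
  -- RHS computation
  have hcomp : (GH.Hs t j).comp (Polynomial.C σ * Polynomial.X) = GH.Hs (t*σ) j := by
    unfold GH.Hs
    rw [Polynomial.comp_assoc]
    congr 1
    simp [Polynomial.mul_comp, Polynomial.C_mul, mul_assoc]
  have hRHS : ∫ x, φ j x ∂stdGauss =
      (Real.sqrt (2*Real.pi))⁻¹ * (K * (σ * GH.Gi (GH.Hs (t*σ) j))) := by
    rw [integral_stdGauss']
    congr 1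
    have h1 : ∀ x, φ j x * GH.gw x =
        K * ((GH.Hs t j).eval x * Real.exp (-((1+2*δ2) * x^2)/2)) := by
      intro x
      rw [hφ j x, ← hK, GH.Hs_eval, ← H_eq]
      unfold GH.gw
      have hee : Real.exp (-δ2*x^2) * Real.exp (-x^2/2)
          = Real.exp (-((1+2*δ2)*x^2)/2) := by
        rw [← Real.exp_add]; congr 1; ring
      linear_combination (K * H j (t*x)) * hee
    calc (∫ x, φ j x * GH.gw x)
        = ∫ x, K * ((GH.Hs t j).eval x * Real.exp (-((1+2*δ2) * x^2)/2)) := by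
          congr 1; funext x; exact h1 x
      _ = K * ∫ x, (GH.Hs t j).eval x * Real.exp (-((1+2*δ2) * x^2)/2) :=
          integral_const_mul K _
      _ = K * (σ * GH.Gi (GH.Hs (t*σ) j)) := by
          rw [GH.cov (1+2*δ2) hs (GH.Hs t j), ← hσ, hcomp]
  rw [hsum1, hex, integral_stdGauss_poly P, hGiP, hRHS]
  have hτ2 : (t*σ)^2 - 1 = c := by
    have ht2 : t^2 = 2*α^2*β^2 := by
      rw [ht, mul_pow, mul_pow, Real.sq_sqrt (by norm_num : (0:ℝ) ≤ 2)]
    have hσ2 : σ^2 = 1/(1+2*δ2) := by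
      rw [hσ]; exact Real.sq_sqrt (by positivity)
    rw [hc, mul_pow, ht2, hσ2]
    ring
  rcases Nat.even_or_odd j with he | ho
  · obtain ⟨r, hr⟩ := he
    have hj2 : j = 2*r := by omega
    have hrM : r ∈ Finset.range M := by
      rw [Finset.mem_range, hM]
      omega
    have hsumv : (∑ m ∈ Finset.range M,
        1/(2^m * (m.factorial : ℝ)) * c^m *
          (if 2*m = j then (j.factorial : ℝ) * Real.sqrt (2*Real.pi) else 0))
        = 1/(2^r * (r.factorial : ℝ)) * c^r * ((j.factorial : ℝ) * Real.sqrt (2*Real.pi)) := by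
      rw [Finset.sum_eq_single r]
      · rw [if_pos (by omega)]
      · intro b _ hb
        rw [if_neg (by omega), mul_zero]
      · intro hcon
        exact absurd hrM hcon
    rw [hsumv, hj2]
    have hGval := GH.Gi_Hs_even (t*σ) r
    rw [hτ2] at hGval
    have h2r : (0:ℝ) < 2^r * (r.factorial : ℝ) := by positivity
    have hGi : GH.Gi (GH.Hs (t*σ) (2*r)) =
        (Nat.factorial (2*r) : ℝ) * c^r * Real.sqrt (2*Real.pi) / (2^r * (r.factorial : ℝ)) := by
      rw [eq_div_iff h2r.ne']
      linear_combination hGval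
    rw [hGi]
    field_simp
  · obtain ⟨r, hr⟩ := ho
    have hsum0 : (∑ m ∈ Finset.range M,
        1/(2^m * (m.factorial : ℝ)) * c^m *
          (if 2*m = j then (j.factorial : ℝ) * Real.sqrt (2*Real.pi) else 0)) = 0 :=
      Finset.sum_eq_zero fun b _ => by rw [if_neg (by omega), mul_zero]
    rw [hsum0, hr, GH.Gi_Hs_odd]
    ring
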